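/- arXiv:2311.17388 — 2 statements merged into one kernel-verified Lean document; each statement's English description precedes it below -/
import Mathlib

section
/- If U is a unitary on H_anc ⊗ H_sys with (⟨0|⊗I) U (|0⟩⊗I) = H/α for a Hermitian operator H and α > 0, and ‖H‖ ≤ α, then the operator 2(H/α)² − I equals (⟨0|⊗I) U† (R₀ ⊗ I) U (|0⟩⊗I), where R₀ = 2|0⟩⟨0| − I is the reflection about the ancilla zero state. In other words, U† (R₀⊗I) U is a (1, b, 0)-block-encoding of the second Chebyshev polynomial 2(H/α)² − I. -/
open scoped InnerProductSpace

/-- Injection |0⟩⊗I : the map v ↦ |z⟩⊗v on a product index space. -/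
noncomputable def injAt {α σ : Type*} [Fintype α] [DecidableEq α] [Fintype σ] (z : α) :
    EuclideanSpace ℂ σ →L[ℂ] EuclideanSpace ℂ (α × σ) :=
  LinearMap.toContinuousLinearMap
  { toFun := fun v => WithLp.toLp 2 (fun (p : α × σ) => if p.1 = z then v p.2 else 0)
    map_add' := by intro u v; ext p; by_cases h : p.1 = z <;> simp [h]
    map_smul' := by intro c v; ext p; by_cases h : p.1 = z <;> simp [h] }

/-- Projection ⟨z|⊗I : the map w ↦ (⟨z|⊗I) w. -/
noncomputable def prjAt {α σ : Type*} [Fintype α] [DecidableEq α] [Fintype σ] (z : α) :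
    EuclideanSpace ℂ (α × σ) →L[ℂ] EuclideanSpace ℂ σ :=
  LinearMap.toContinuousLinearMap
  { toFun := fun w => WithLp.toLp 2 (fun j => w (z, j))
    map_add' := by intro u v; ext j; simp
    map_smul' := by intro c v; ext j; simp }

/-- The top-left block (⟨z|⊗I) U (|z⟩⊗I) of an operator on the product space. -/
noncomputable def blockAt {α σ : Type*} [Fintype α] [DecidableEq α] [Fintype σ] (z : α)
    (U : EuclideanSpace ℂ (α × σ) →L[ℂ] EuclideanSpace ℂ (α × σ)) :
    EuclideanSpace ℂ σ →L[ℂ] EuclideanSpace ℂ σ :=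
  prjAt z ∘L U ∘L injAt z

lemma prjAt_comp_injAt {α σ : Type*} [Fintype α] [DecidableEq α] [Fintype σ] (z : α) :
    prjAt (σ := σ) z ∘L injAt z = 1 := by
  ext v j
  simp [prjAt, injAt]

lemma adjoint_injAt {α σ : Type*} [Fintype α] [DecidableEq α] [Fintype σ] (z : α) :
    ContinuousLinearMap.adjoint (injAt (σ := σ) z) = prjAt z := by
  symm
  rw [ContinuousLinearMap.eq_adjoint_iff]
  intro w v
  simp only [prjAt, injAt, LinearMap.coe_toContinuousLinearMap', LinearMap.coe_mk,
    AddHom.coe_mk]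
  simp only [PiLp.inner_apply, RCLike.inner_apply]
  rw [Fintype.sum_prod_type]
  rw [Finset.sum_eq_single z]
  · simp
  · intro a _ ha
    simp [ha]
  · simp

/-- if U is a unitary block-encoding of H/α (H Hermitian, 0 < α, ‖H‖ ≤ α), then
U† (R₀⊗I) U is a (1,b,0)-block-encoding of 2(H/α)² − I, where R₀ = 2|0⟩⟨0| − I. -/
theorem stmt_0 (b n : ℕ)
    (U : EuclideanSpace ℂ (Fin (2^b) × Fin (2^n)) →L[ℂ]
         EuclideanSpace ℂ (Fin (2^b) × Fin (2^n)))
    (hU : U ∈ unitary (EuclideanSpace ℂ (Fin (2^b) × Fin (2^n)) →L[ℂ]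
         EuclideanSpace ℂ (Fin (2^b) × Fin (2^n))))
    (H : EuclideanSpace ℂ (Fin (2^n)) →L[ℂ] EuclideanSpace ℂ (Fin (2^n)))
    (hH : IsSelfAdjoint H) (α : ℝ) (hα : 0 < α) (hnorm : ‖H‖ ≤ α)
    (z : Fin (2^b)) (hz : (z : ℕ) = 0)
    (hblock : blockAt z U = α⁻¹ • H) :
    blockAt z (star U ∘L ((2 : ℂ) • (injAt (σ := Fin (2^n)) z ∘L prjAt z) - 1) ∘L U)
      = (2 : ℂ) • ((α⁻¹ • H) ∘L (α⁻¹ • H)) - 1 := by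
  have hpi : prjAt (σ := Fin (2^n)) z ∘L injAt z = 1 := prjAt_comp_injAt z
  have hadj : ContinuousLinearMap.adjoint (injAt (σ := Fin (2^n)) z) = prjAt z :=
    adjoint_injAt z
  have hUU : star U ∘L U = 1 := hU.1
  -- star of the block is the block of the star
  have hstarblock : blockAt z (star U) = α⁻¹ • H := by
    have : blockAt z (star U) = star (blockAt z U) := by
      simp only [blockAt, ContinuousLinearMap.star_eq_adjoint, ← hadj,
        ContinuousLinearMap.adjoint_comp, ContinuousLinearMap.adjoint_adjoint]
      rfl
    rw [this, hblock]
    have hs : α⁻¹ • H = ((α⁻¹ : ℝ) : ℂ) • H := by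
      ext v i
      simp [Complex.real_smul]
    rw [hs, star_smul, hH.star_eq]
    norm_num
  -- expand
  have expand : star U ∘L ((2 : ℂ) • (injAt (σ := Fin (2^n)) z ∘L prjAt z) - 1) ∘L U
      = (2 : ℂ) • (star U ∘L (injAt z ∘L prjAt z) ∘L U) - 1 := by
    simp only [← ContinuousLinearMap.mul_def, mul_sub, sub_mul, one_mul, mul_one,
      mul_smul_comm, smul_mul_assoc, mul_assoc]
    rw [show star U * U = 1 from hU.1]
  rw [expand]
  have hblk2 : blockAt z ((2 : ℂ) • (star U ∘L (injAt z ∘L prjAt z) ∘L U) - 1)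
      = (2 : ℂ) • blockAt z (star U ∘L (injAt z ∘L prjAt z) ∘L U) - 1 := by
    simp only [blockAt, ContinuousLinearMap.comp_sub, ContinuousLinearMap.sub_comp,
      ContinuousLinearMap.comp_smul, ContinuousLinearMap.smul_comp,
      ContinuousLinearMap.one_def, ContinuousLinearMap.id_comp,
      ContinuousLinearMap.comp_id, ContinuousLinearMap.comp_assoc]
    rw [← ContinuousLinearMap.comp_assoc, hpi, ContinuousLinearMap.one_def]
  rw [hblk2]
  have hkey : blockAt z (star U ∘L (injAt z ∘L prjAt z) ∘L U)
      = blockAt z (star U) ∘L blockAt z U := by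
    simp only [blockAt, ContinuousLinearMap.comp_assoc]
  rw [hkey, hstarblock, hblock]
end

section
/- Let N' ≥ 2 and consider the state |φ⟩ = (1/√(N'(N'−1))) Σ_{i=0}^{N'-1} [ |i⟩ Σ_{j=0}^{min(2i−1, N'−2)} |j⟩ |0⟩ + |N'−1−i⟩ Σ_{j=min(N'−1, 2i)}^{N'-2} |j⟩ |1⟩ ] in ℂ^{N'} ⊗ ℂ^{N'-1} ⊗ ℂ². For each n with 0 ≤ n ≤ N'−1, the squared norm of the projection of |φ⟩ onto the subspace |n⟩⟨n| ⊗ I ⊗ I equals 2n/(N'(N'−1)). -/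
lemma esum_apply' {ι κ : Type*} (s : Finset κ) (f : κ → EuclideanSpace ℂ ι) (p : ι) :
    (∑ i ∈ s, f i) p = ∑ i ∈ s, f i p := by simp [WithLp.ofLp_sum]

lemma esmul_apply' {ι : Type*} (c : ℝ) (v : EuclideanSpace ℂ ι) (p : ι) :
    (c • v) p = c • v p := rfl

lemma eadd_apply' {ι : Type*} (v w : EuclideanSpace ℂ ι) (p : ι) :
    (v + w) p = v p + w p := rfl

lemma count_lt (M K : ℕ) (x : ℝ) :
    ∑ m ∈ Finset.range M, (if m < K then x else 0) = (min K M : ℕ) * x := by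
  classical
  rw [Finset.sum_ite, Finset.sum_const, Finset.sum_const_zero, add_zero, nsmul_eq_mul]
  congr 2
  have h : (Finset.range M).filter (fun m => m < K) = Finset.range (min K M) := by
    ext m; simp only [Finset.mem_filter, Finset.mem_range, lt_min_iff]; omega
  rw [h, Finset.card_range]

lemma count_ge (M K : ℕ) (x : ℝ) :
    ∑ m ∈ Finset.range M, (if K ≤ m then x else 0) = ((M - K : ℕ) : ℝ) * x := by
  classical
  rw [Finset.sum_ite, Finset.sum_const, Finset.sum_const_zero, add_zero, nsmul_eq_mul]
  congr 2
  have h : (Finset.range M).filter (fun m => K ≤ m) = Finset.Ico K M := by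
    ext m; simp only [Finset.mem_filter, Finset.mem_range, Finset.mem_Ico]; omega
  rw [h, Nat.card_Ico]



/-- for the state φ = (1/√(N'(N'−1))) Σ_i [ |i⟩ Σ_{j=0}^{min(2i−1,N'−2)} |j⟩|0⟩
+ |N'−1−i⟩ Σ_{j=min(N'−1,2i)}^{N'−2} |j⟩|1⟩ ] in ℂ^{N'} ⊗ ℂ^{N'−1} ⊗ ℂ², the squared norm of
the projection onto |n⟩⟨n| ⊗ I ⊗ I equals 2n/(N'(N'−1)). -/
theorem stmt_6 (N' : ℕ) (hN' : 2 ≤ N')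
    (φ : EuclideanSpace ℂ (Fin N' × Fin (N' - 1) × Fin 2))
    (hφ : φ = (1 / Real.sqrt ((N' : ℝ) * ((N' : ℝ) - 1))) •
      ∑ i : Fin N',
        ((∑ j ∈ (Finset.range (min (2 * (i : ℕ)) (N' - 1))).attach,
            EuclideanSpace.single
              (i, (⟨(j : ℕ), by have := Finset.mem_range.mp j.2; omega⟩ : Fin (N' - 1)),
                (0 : Fin 2)) (1 : ℂ))
         + (∑ j ∈ (Finset.Ico (min (N' - 1) (2 * (i : ℕ))) (N' - 1)).attach,
            EuclideanSpace.single
              ((⟨N' - 1 - (i : ℕ), by omega⟩ : Fin N'),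
                (⟨(j : ℕ), by have := (Finset.mem_Ico.mp j.2).2; omega⟩ : Fin (N' - 1)),
                (1 : Fin 2)) (1 : ℂ)))) :
    ∀ n : Fin N',
      ‖(show EuclideanSpace ℂ (Fin N' × Fin (N' - 1) × Fin 2) from
          WithLp.toLp 2 (fun p => if p.1 = n then φ p else 0))‖ ^ 2
        = 2 * (n : ℝ) / ((N' : ℝ) * ((N' : ℝ) - 1)) := by
  intro n
  set c : ℝ := 1 / Real.sqrt ((N' : ℝ) * ((N' : ℝ) - 1)) with hc
  have hpos : (0:ℝ) < (N' : ℝ) * ((N' : ℝ) - 1) := by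
    have h2 : (2:ℝ) ≤ (N' : ℝ) := by exact_mod_cast hN'
    nlinarith
  have key : ∀ (j : Fin (N' - 1)) (s : Fin 2),
      φ (n, j, s) = if ((s : ℕ) = 0 ∧ (j : ℕ) < min (2 * (n : ℕ)) (N' - 1)) ∨
          ((s : ℕ) = 1 ∧ min (N' - 1) (2 * (N' - 1 - (n : ℕ))) ≤ (j : ℕ))
        then (c : ℂ) else 0 := by
    intro j s
    rw [hφ]
    simp only [esmul_apply', esum_apply', eadd_apply', EuclideanSpace.single_apply,
      Prod.mk.injEq, Fin.ext_iff, Fin.val_zero, Fin.val_one]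
    have h1 : ∀ x : Fin N',
        (∑ x_1 ∈ (Finset.range (2 * (x:ℕ) ⊓ (N' - 1))).attach,
            if (n:ℕ) = (x:ℕ) ∧ (j:ℕ) = (x_1 : ℕ) ∧ (s:ℕ) = 0 then (1:ℂ) else 0)
          = if (n:ℕ) = (x:ℕ) ∧ ((s:ℕ) = 0 ∧ (j:ℕ) < 2 * (x:ℕ) ⊓ (N' - 1)) then 1 else 0 := by
      intro x
      rw [Finset.sum_attach _ (fun m => if (n:ℕ) = (x:ℕ) ∧ (j:ℕ) = m ∧ (s:ℕ) = 0 then (1:ℂ) else 0)]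
      by_cases h : (n:ℕ) = (x:ℕ) ∧ (s:ℕ) = 0
      · simp [h.1, h.2, Finset.sum_ite_eq' (Finset.range _) (j:ℕ) (fun _ => (1:ℂ))]
      · rw [if_neg (by tauto), Finset.sum_eq_zero]
        intro m hm; rw [if_neg (by tauto)]
    have h2 : ∀ x : Fin N',
        (∑ x_1 ∈ (Finset.Ico ((N' - 1) ⊓ (2 * (x:ℕ))) (N' - 1)).attach,
            if (n:ℕ) = N' - 1 - (x:ℕ) ∧ (j:ℕ) = (x_1 : ℕ) ∧ (s:ℕ) = 1 then (1:ℂ) else 0)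
          = if (n:ℕ) = N' - 1 - (x:ℕ) ∧ ((s:ℕ) = 1 ∧ (N' - 1) ⊓ (2 * (x:ℕ)) ≤ (j:ℕ)) then 1 else 0 := by
      intro x
      rw [Finset.sum_attach _ (fun m => if (n:ℕ) = N' - 1 - (x:ℕ) ∧ (j:ℕ) = m ∧ (s:ℕ) = 1 then (1:ℂ) else 0)]
      by_cases h : (n:ℕ) = N' - 1 - (x:ℕ) ∧ (s:ℕ) = 1
      · have hj := j.isLt
        simp [h.1, h.2, Finset.sum_ite_eq' (Finset.Ico _ _) (j:ℕ) (fun _ => (1:ℂ)),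
          Finset.mem_Ico]
      · rw [if_neg (by tauto), Finset.sum_eq_zero]
        intro m hm; rw [if_neg (by tauto)]
    simp_rw [h1, h2]
    rw [Finset.sum_add_distrib]
    have e1 : (∑ x : Fin N',
        if (n:ℕ) = (x:ℕ) ∧ ((s:ℕ) = 0 ∧ (j:ℕ) < 2 * (x:ℕ) ⊓ (N' - 1)) then (1:ℂ) else 0)
        = if (s:ℕ) = 0 ∧ (j:ℕ) < 2 * (n:ℕ) ⊓ (N' - 1) then 1 else 0 := by
      have : ∀ x : Fin N', ((n:ℕ) = (x:ℕ)) = (n = x) := fun x => by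
        simp [Fin.ext_iff]
      simp_rw [this, ite_and]
      rw [Finset.sum_ite_eq Finset.univ n
        (fun x => if (s:ℕ) = 0 then if (j:ℕ) < 2 * (x:ℕ) ⊓ (N' - 1) then (1:ℂ) else 0 else 0)]
      simp [ite_and]
    have e2 : (∑ x : Fin N',
        if (n:ℕ) = N' - 1 - (x:ℕ) ∧ ((s:ℕ) = 1 ∧ (N' - 1) ⊓ (2 * (x:ℕ)) ≤ (j:ℕ)) then (1:ℂ) else 0)
        = if (s:ℕ) = 1 ∧ (N' - 1) ⊓ (2 * (N' - 1 - (n:ℕ))) ≤ (j:ℕ) then 1 else 0 := by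
      have hmem : ∀ x : Fin N', ((n:ℕ) = N' - 1 - (x:ℕ)) =
          ((⟨N' - 1 - (n:ℕ), by omega⟩ : Fin N') = x) := fun x => by
        have hx := x.isLt; have hn := n.isLt
        simp only [Fin.ext_iff, Fin.val_mk]
        exact propext ⟨fun h => by omega, fun h => by omega⟩
      simp_rw [hmem, ite_and]
      rw [Finset.sum_ite_eq Finset.univ (⟨N' - 1 - (n:ℕ), by omega⟩ : Fin N')
        (fun x => if (s:ℕ) = 1 then if (N' - 1) ⊓ (2 * (x:ℕ)) ≤ (j:ℕ) then (1:ℂ) else 0 else 0)]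
      simp [ite_and]
    rw [e1, e2]
    have hs : (s:ℕ) = 0 ∨ (s:ℕ) = 1 := by omega
    rcases hs with hs | hs <;>
      simp [hs, Complex.real_smul] <;> split_ifs <;> simp
  -- now compute the norm
  have hc2' : c ^ 2 = 1 / ((N' : ℝ) * ((N' : ℝ) - 1)) := by
    rw [hc, div_pow, one_pow, Real.sq_sqrt hpos.le]
  have hc2 : ‖(c : ℂ)‖ ^ 2 = 1 / ((N' : ℝ) * ((N' : ℝ) - 1)) := by
    rw [Complex.norm_real, Real.norm_eq_abs, sq_abs, hc2']
  rw [EuclideanSpace.norm_eq, Real.sq_sqrt (Finset.sum_nonneg fun _ _ => sq_nonneg _)]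
  rw [Fintype.sum_prod_type]
  have step1 : ∀ a : Fin N',
      (∑ q : Fin (N' - 1) × Fin 2, ‖if (a, q).1 = n then φ (a, q) else 0‖ ^ 2)
        = if a = n then (∑ q : Fin (N' - 1) × Fin 2, ‖φ (n, q)‖ ^ 2) else 0 := by
    intro a
    by_cases h : a = n
    · subst h; simp
    · simp [h]
  rw [Finset.sum_congr rfl (fun a _ => step1 a),
    Finset.sum_ite_eq' Finset.univ n (fun _ => ∑ q : Fin (N' - 1) × Fin 2, ‖φ (n, q)‖ ^ 2)]
  simp only [Finset.mem_univ, if_true]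
  rw [Fintype.sum_prod_type]
  have comp : ∀ j : Fin (N' - 1),
      (∑ s : Fin 2, ‖φ (n, j, s)‖ ^ 2)
        = (if (j:ℕ) < 2 * (n:ℕ) ⊓ (N' - 1) then 1 / ((N' : ℝ) * ((N' : ℝ) - 1)) else 0)
          + (if (N' - 1) ⊓ (2 * (N' - 1 - (n:ℕ))) ≤ (j:ℕ) then 1 / ((N' : ℝ) * ((N' : ℝ) - 1)) else 0) := by
    intro j
    rw [Fin.sum_univ_two, key j 0, key j 1]
    simp only [Fin.val_zero, Fin.val_one]
    norm_num
    split_ifs <;>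
      simp [Complex.norm_real, Real.norm_eq_abs, sq_abs, hc2'] <;>
      omega
  rw [Finset.sum_congr rfl (fun j _ => comp j), Finset.sum_add_distrib]
  rw [Fin.sum_univ_eq_sum_range
    (fun m => if m < 2 * (n:ℕ) ⊓ (N' - 1) then 1 / ((N' : ℝ) * ((N' : ℝ) - 1)) else 0)]
  rw [Fin.sum_univ_eq_sum_range
    (fun m => if (N' - 1) ⊓ (2 * (N' - 1 - (n:ℕ))) ≤ m then 1 / ((N' : ℝ) * ((N' : ℝ) - 1)) else 0)]
  rw [count_lt, count_ge, ← add_mul, ← Nat.cast_add]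
  have hnat : (min (2 * (n:ℕ) ⊓ (N' - 1)) (N' - 1)
      + (N' - 1 - (N' - 1) ⊓ (2 * (N' - 1 - (n:ℕ))))) = 2 * (n:ℕ) := by
    have := n.isLt; omega
  rw [hnat]
  push_cast
  field_simp
end
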